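/- Let n, m ≥ 1, let f̂ : ℝⁿ → ℝ be continuously differentiable, let B be a real m × n matrix of full column rank, let λ > 0, and let 0 < p < 1. Define f(x) = f̂(x) + λ Σ_{i=1}^m |(Bx)_i|^p and f̃(x, μ) = f̂(x) + λ Σ_{i=1}^m s_μ((Bx)_i)^p for μ > 0. Then f̃ satisfies Riemannian gradient sub-consistency on the unit sphere S^{n−1}: for every x ∈ S^{n−1} and every v ∈ ℝⁿ such that Proj_{z_k}(∇_x f̃(z_k, μ_k)) → v for some sequences z_k ∈ S^{n−1} with z_k → x and μ_k → 0⁺, one has v ∈ ∂_R f(x), the Riemannian limiting subdifferential of f at x on the sphere. -/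

import Mathlib

open Filter Topology

/-- The uniform smoothing function of the absolute value:
`s_μ(t) = |t|` if `|t| ≥ μ/2`, and `s_μ(t) = t²/μ + μ/4` if `|t| < μ/2`. -/
noncomputable def sMu (μ t : ℝ) : ℝ := if μ / 2 ≤ |t| then |t| else t ^ 2 / μ + μ / 4

/-- The orthogonal projection onto the tangent space of the unit sphere at `x`:
`Proj_x(v) = v − ⟨v, x⟩x`. -/
noncomputable def sphereProj {n : ℕ} (x v : EuclideanSpace ℝ (Fin n)) :
    EuclideanSpace ℝ (Fin n) :=
  v - (inner ℝ v x : ℝ) • x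

/-- `v` is a Riemannian Fréchet subgradient of `f` at `x ∈ S^{n−1}`: there exist `δ > 0`
and `h` continuously differentiable on the open ball of radius `δ` centered at `x` such
that `f − h` attains a local minimum at `x` relative to the sphere and
`v = Proj_x(∇h(x))`. -/
def IsRFrechetSubgradient {n : ℕ} (f : EuclideanSpace ℝ (Fin n) → ℝ)
    (x v : EuclideanSpace ℝ (Fin n)) : Prop :=
  ∃ δ > (0 : ℝ), ∃ h : EuclideanSpace ℝ (Fin n) → ℝ,
    ContDiffOn ℝ 1 h (Metric.ball x δ) ∧
    (∃ ε > (0 : ℝ), ∀ y, ‖y‖ = 1 → ‖y - x‖ < ε → f x - h x ≤ f y - h y) ∧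
    v = sphereProj x (gradient h x)

/-- `v ∈ ∂_R f(x)`: `v` is a Riemannian limiting subgradient of `f` at `x ∈ S^{n−1}`. -/
def IsRLimitingSubgradient {n : ℕ} (f : EuclideanSpace ℝ (Fin n) → ℝ)
    (x v : EuclideanSpace ℝ (Fin n)) : Prop :=
  ∃ (xk vk : ℕ → EuclideanSpace ℝ (Fin n)),
    (∀ k, ‖xk k‖ = 1) ∧
    Filter.Tendsto xk Filter.atTop (nhds x) ∧
    Filter.Tendsto (fun k => f (xk k)) Filter.atTop (nhds (f x)) ∧
    (∀ k, IsRFrechetSubgradient f (xk k) (vk k)) ∧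
    Filter.Tendsto vk Filter.atTop (nhds v)

/-! ### Auxiliary lemmas -/

/-- The derivative of the smoothing function. -/
noncomputable def sDer (μ t : ℝ) : ℝ :=
  if μ / 2 ≤ |t| then (SignType.sign t : ℝ) else 2 * t / μ

lemma sMu_pos {μ : ℝ} (hμ : 0 < μ) (t : ℝ) : 0 < sMu μ t := by
  unfold sMu; split
  · linarith [abs_nonneg t]
  · positivity

lemma sMu_le {μ : ℝ} (hμ : 0 < μ) (t : ℝ) : sMu μ t ≤ |t| + μ / 2 := by
  unfold sMu; split
  · linarith
  · rename_i h
    push_neg at h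
    have h1 : t^2 ≤ μ^2/4 := by nlinarith [sq_abs t, abs_nonneg t]
    have h5 : t^2/μ ≤ (μ^2/4)/μ := by gcongr
    have h6 : (μ^2/4)/μ = μ/4 := by field_simp
    have := abs_nonneg t
    linarith

lemma sMu_sub_abs_nonneg {μ : ℝ} (hμ : 0 < μ) (t : ℝ) : 0 ≤ sMu μ t - |t| := by
  unfold sMu; split
  · simp
  · have h2 : (|t| - μ/2)^2 = t^2 - μ*|t| + μ^2/4 := by rw [sub_sq, sq_abs]; ring
    have h1 := sq_nonneg (|t| - μ/2)
    have h3 : 0 ≤ (t^2 - μ*|t| + μ^2/4)/μ := div_nonneg (by linarith) hμ.le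
    have h4 : (t^2 - μ*|t| + μ^2/4)/μ = t^2/μ + μ/4 - |t| := by field_simp; ring
    linarith

lemma sMu_sub_abs_le {μ : ℝ} (hμ : 0 < μ) (t : ℝ) : sMu μ t - |t| ≤ (|t| - μ/2)^2 / μ := by
  unfold sMu; split
  · simp [div_nonneg (sq_nonneg _) hμ.le]
  · have h2 : (|t| - μ/2)^2 = t^2 - μ*|t| + μ^2/4 := by rw [sub_sq, sq_abs]; ring
    have h4 : (t^2 - μ*|t| + μ^2/4)/μ = t^2/μ + μ/4 - |t| := by field_simp; ring
    rw [h2, h4]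

lemma sq_isLittleO (t : ℝ) : (fun s : ℝ => (s - t)^2) =o[nhds t] (fun s => s - t) := by
  rw [Asymptotics.isLittleO_iff]
  intro c hc
  have habs : Tendsto (fun s : ℝ => |s - t|) (nhds t) (nhds 0) := by
    have : Tendsto (fun s : ℝ => |s - t|) (nhds t) (nhds |t - t|) :=
      ((continuous_id.sub continuous_const).abs).continuousAt
    simpa using this
  refine (habs.eventually_lt_const hc).mono (fun s hs => ?_)
  rw [Real.norm_eq_abs, Real.norm_eq_abs, abs_pow, pow_two]
  exact mul_le_mul_of_nonneg_right hs.le (abs_nonneg _)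

lemma sMu_hasDerivAt_boundary {μ t σ : ℝ} (hμ : 0 < μ) (hb : |t| = μ/2)
    (hσ : ∀ s : ℝ, |s - t| < μ/2 → σ * s = |s|) : HasDerivAt (sMu μ) σ t := by
  have ht0 : |t - t| < μ/2 := by simpa using half_pos hμ
  have hσt : σ * t = |t| := hσ t ht0
  have htne : t ≠ 0 := by intro h0; rw [h0] at hb; simp at hb; linarith
  have hσsq : σ^2 = 1 := by
    have h1 : (σ * t)^2 = t^2 := by rw [hσt, sq_abs]
    have h2 : σ^2 * t^2 = 1 * t^2 := by rw [← mul_pow] at *; rw [h1]; ring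
    exact mul_right_cancel₀ (pow_ne_zero 2 htne) h2
  rw [hasDerivAt_iff_isLittleO]
  have hbound : ∀ᶠ s in nhds t, ‖sMu μ s - sMu μ t - (s - t) • σ‖ ≤ (1/μ) * ‖(s-t)^2‖ := by
    have habs : Tendsto (fun s : ℝ => |s - t|) (nhds t) (nhds 0) := by
      have : Tendsto (fun s : ℝ => |s - t|) (nhds t) (nhds |t - t|) :=
        ((continuous_id.sub continuous_const).abs).continuousAt
      simpa using this
    refine (habs.eventually_lt_const (half_pos hμ)).mono (fun s hs => ?_)
    have hσs : σ * s = |s| := hσ s hs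
    have hst : sMu μ t = |t| := by rw [sMu, if_pos hb.ge]
    have key : sMu μ s - sMu μ t - (s - t) • σ = sMu μ s - |s| := by
      rw [smul_eq_mul, hst, ← hσt, ← hσs]; ring
    have h1 : 0 ≤ sMu μ s - |s| := sMu_sub_abs_nonneg hμ s
    have h2 : sMu μ s - |s| ≤ (|s| - μ/2)^2/μ := sMu_sub_abs_le hμ s
    have h3 : (|s| - μ/2)^2 = (s - t)^2 := by
      rw [← hb, ← hσs, ← hσt]
      have : σ * s - σ * t = σ * (s - t) := by ring
      rw [this, mul_pow, hσsq, one_mul]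
    rw [key, Real.norm_eq_abs, Real.norm_eq_abs, abs_of_nonneg h1,
      abs_of_nonneg (sq_nonneg (s - t))]
    calc sMu μ s - |s| ≤ (|s| - μ/2)^2/μ := h2
    _ = (s-t)^2/μ := by rw [h3]
    _ = 1/μ * (s-t)^2 := by ring
  exact (Asymptotics.IsBigO.of_bound (1/μ) hbound).trans_isLittleO (sq_isLittleO t)

lemma sMu_hasDerivAt {μ : ℝ} (hμ : 0 < μ) (t : ℝ) : HasDerivAt (sMu μ) (sDer μ t) t := by
  rcases lt_trichotomy (μ/2) |t| with h | h | h
  · have ht : t ≠ 0 := by intro h0; rw [h0] at h; simp at h; linarith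
    have habs : HasDerivAt (fun s => |s|) (SignType.sign t : ℝ) t := hasDerivAt_abs ht
    have heq : (fun s => sMu μ s) =ᶠ[nhds t] (fun s => |s|) := by
      have hopen : ∀ᶠ s in nhds t, μ/2 < |s| :=
        (continuous_abs.continuousAt (x := t)).eventually_const_lt h
      exact hopen.mono (fun s hs => by simp [sMu, le_of_lt hs])
    have : HasDerivAt (fun s => sMu μ s) (SignType.sign t : ℝ) t :=
      habs.congr_of_eventuallyEq heq
    simpa [sDer, le_of_lt h] using this
  · have ht : t ≠ 0 := by intro h0; rw [h0] at h; simp at h; linarith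
    have hder : sDer μ t = (SignType.sign t : ℝ) := by rw [sDer, if_pos h.le]
    rw [hder]
    rcases ht.lt_or_gt with h' | h'
    · have hs1 : (SignType.sign t : ℝ) = -1 := by simp [h']
      rw [hs1]
      refine sMu_hasDerivAt_boundary hμ h.symm (fun s hs => ?_)
      have hsneg : s < 0 := by
        have := abs_lt.mp hs
        rw [abs_of_neg h'] at h
        linarith
      rw [abs_of_neg hsneg]; ring
    · have hs1 : (SignType.sign t : ℝ) = 1 := by simp [h']
      rw [hs1]
      refine sMu_hasDerivAt_boundary hμ h.symm (fun s hs => ?_)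
      have hspos : 0 < s := by
        have := abs_lt.mp hs
        rw [abs_of_pos h'] at h
        linarith
      rw [abs_of_pos hspos]; ring
  · have heq : (fun s => sMu μ s) =ᶠ[nhds t] (fun s => s^2/μ + μ/4) := by
      have hopen : ∀ᶠ s in nhds t, |s| < μ/2 :=
        continuous_abs.continuousAt.eventually_lt_const h
      exact hopen.mono (fun s hs => by simp [sMu, not_le.mpr hs])
    have hq : HasDerivAt (fun s => s^2/μ + μ/4) (2*t/μ) t := by
      have h1 : HasDerivAt (fun s : ℝ => s^2) (2*t) t := by
        simpa using hasDerivAt_pow 2 t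
      simpa using (h1.div_const μ).add_const (μ/4)
    have := hq.congr_of_eventuallyEq heq
    simpa [sDer, not_le.mpr h] using this

lemma sDer_mul_le {μ : ℝ} (hμ : 0 < μ) (t : ℝ) : |sDer μ t * t| ≤ 2 * sMu μ t := by
  unfold sDer sMu; split
  · have h2 : |(SignType.sign t : ℝ)| ≤ 1 := by
      rcases lt_trichotomy t 0 with h | h | h <;> simp [sign_neg, sign_pos, h]
    calc |(SignType.sign t : ℝ) * t| = |(SignType.sign t : ℝ)| * |t| := abs_mul _ _
    _ ≤ 1 * |t| := mul_le_mul_of_nonneg_right h2 (abs_nonneg t)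
    _ ≤ 2 * |t| := by linarith [abs_nonneg t]
  · have h1 : |2 * t / μ * t| = 2 * t^2 / μ := by
      rw [show 2 * t / μ * t = 2*t^2/μ by ring, abs_of_nonneg (by positivity)]
    rw [h1]
    have h3 : 2 * (t^2/μ + μ/4) = 2*t^2/μ + μ/2 := by ring
    have h4 : (0:ℝ) ≤ μ/2 := by positivity
    linarith

lemma cderiv_mul_bound {μ p : ℝ} (hμ : 0 < μ) (hp0 : 0 < p) (t : ℝ) :
    |p * sMu μ t ^ (p - 1) * sDer μ t * t| ≤ 2 * p * sMu μ t ^ p := by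
  have hpos := sMu_pos hμ t
  have h1 : |p * sMu μ t ^ (p-1) * sDer μ t * t| = p * sMu μ t ^ (p-1) * |sDer μ t * t| := by
    rw [show p * sMu μ t ^ (p-1) * sDer μ t * t = (p * sMu μ t ^ (p-1)) * (sDer μ t * t) by ring,
      abs_mul, abs_of_nonneg (by positivity)]
  rw [h1]
  calc p * sMu μ t ^ (p-1) * |sDer μ t * t| ≤ p * sMu μ t ^ (p-1) * (2 * sMu μ t) := by
        apply mul_le_mul_of_nonneg_left (sDer_mul_le hμ t) (by positivity)
  _ = 2 * p * (sMu μ t ^ (p-1) * sMu μ t) := by ring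
  _ = 2 * p * sMu μ t ^ p := by
      rw [← Real.rpow_add_one hpos.ne' (p-1)]
      ring_nf

lemma scalar_minor {lam p : ℝ} (hlam : 0 < lam) (hp0 : 0 < p) (hp1 : p < 1) (c : ℝ) :
    ∃ κ > (0:ℝ), ∀ t : ℝ, |t| ≤ κ → c * t ≤ lam * |t| ^ p := by
  have hd : (0:ℝ) < lam / (|c| + 1) := by positivity
  refine ⟨min 1 ((lam / (|c| + 1)) ^ (1/(1-p))), lt_min one_pos (Real.rpow_pos_of_pos hd _), ?_⟩
  intro t ht
  rcases eq_or_ne t 0 with rfl | htne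
  · simp [Real.zero_rpow hp0.ne']
  have habs : 0 < |t| := abs_pos.mpr htne
  have step1 : c * t ≤ |c| * |t| := by
    calc c * t ≤ |c * t| := le_abs_self _
    _ = |c| * |t| := abs_mul c t
  have split : |t| = |t| ^ (1-p) * |t| ^ p := by
    rw [← Real.rpow_add habs, sub_add_cancel, Real.rpow_one]
  have hk1 : |t| ^ (1-p) ≤ lam / (|c| + 1) := by
    have h2 : |t| ^ (1-p) ≤ ((lam / (|c| + 1)) ^ (1/(1-p))) ^ (1-p) :=
      Real.rpow_le_rpow (abs_nonneg t) (le_trans ht (min_le_right _ _)) (by linarith)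
    have h3 : ((lam / (|c| + 1)) ^ (1/(1-p))) ^ (1-p) = lam / (|c| + 1) := by
      rw [← Real.rpow_mul hd.le, one_div_mul_cancel (by linarith : (1:ℝ) - p ≠ 0),
        Real.rpow_one]
    rw [h3] at h2; exact h2
  have hc1 : |c| * (lam / (|c| + 1)) ≤ lam := by
    rw [mul_comm, div_mul_eq_mul_div, div_le_iff₀ (by positivity)]
    nlinarith [abs_nonneg c]
  calc c * t ≤ |c| * |t| := step1
  _ = |c| * (|t| ^ (1-p) * |t| ^ p) := by rw [← split]
  _ = (|c| * |t| ^ (1-p)) * |t| ^ p := by ring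
  _ ≤ (|c| * (lam / (|c|+1))) * |t| ^ p := by
      apply mul_le_mul_of_nonneg_right _ (Real.rpow_nonneg (abs_nonneg t) p)
      exact mul_le_mul_of_nonneg_left hk1 (abs_nonneg c)
  _ ≤ lam * |t| ^ p :=
      mul_le_mul_of_nonneg_right hc1 (Real.rpow_nonneg (abs_nonneg t) p)

/-- the i-th row of B as a vector in Euclidean space -/
def rowE {n m : ℕ} (B : Matrix (Fin m) (Fin n) ℝ) : Fin m → EuclideanSpace ℝ (Fin n) :=
  fun i => WithLp.toLp 2 (fun j => B i j)

lemma mulVec_eq_inner {n m : ℕ} (B : Matrix (Fin m) (Fin n) ℝ)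
    (y : EuclideanSpace ℝ (Fin n)) (i : Fin m) :
    B.mulVec y i = @inner ℝ (EuclideanSpace ℝ (Fin n)) _ (rowE B i) y := by
  simp [rowE, Matrix.mulVec, dotProduct, PiLp.inner_apply, RCLike.inner_apply, mul_comm]

lemma sphereProj_add {n : ℕ} (x a b : EuclideanSpace ℝ (Fin n)) :
    sphereProj x (a + b) = sphereProj x a + sphereProj x b := by
  simp only [sphereProj, inner_add_left]
  rw [add_smul]
  abel

lemma exists_ball_of_eventually {n : ℕ} {x : EuclideanSpace ℝ (Fin n)}
    {P : EuclideanSpace ℝ (Fin n) → Prop} (h : ∀ᶠ y in nhds x, P y) :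
    ∃ δ > (0:ℝ), ∀ y, dist y x < δ → P y := by
  rcases eventually_nhds_iff.mp h with ⟨t, ht, hopen, hxt⟩
  rcases Metric.isOpen_iff.mp hopen x hxt with ⟨δ, hδ, hball⟩
  exact ⟨δ, hδ, fun y hy => ht y (hball (by rwa [Metric.mem_ball]))⟩

lemma smoothed_hasGradientAt {n m : ℕ} (fhat : EuclideanSpace ℝ (Fin n) → ℝ)
    (hfhat : ContDiff ℝ 1 fhat)
    (B : Matrix (Fin m) (Fin n) ℝ) (lam p : ℝ) {μ : ℝ} (hμ : 0 < μ)
    (z : EuclideanSpace ℝ (Fin n)) :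
    HasGradientAt (fun y => fhat y + lam * ∑ i, sMu μ (B.mulVec y i) ^ p)
      (gradient fhat z + lam • ∑ i,
        (p * sMu μ (B.mulVec z i) ^ (p - 1) * sDer μ (B.mulVec z i)) • rowE B i) z := by
  classical
  set r : Fin m → EuclideanSpace ℝ (Fin n) := rowE B with hr
  set c : Fin m → ℝ := fun i => p * sMu μ (B.mulVec z i) ^ (p - 1) * sDer μ (B.mulVec z i) with hc
  have hf : HasFDerivAt fhat (fderiv ℝ fhat z) z :=
    (hfhat.differentiable one_ne_zero z).hasFDerivAt
  have hterm : ∀ i : Fin m, HasFDerivAt (fun y : EuclideanSpace ℝ (Fin n) => sMu μ (B.mulVec y i) ^ p)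
      (c i • (innerSL ℝ (r i))) z := by
    intro i
    have hinner : HasFDerivAt (fun y : EuclideanSpace ℝ (Fin n) => B.mulVec y i)
        (innerSL ℝ (r i)) z := by
      have h0 := (innerSL ℝ (r i)).hasFDerivAt (x := z)
      refine h0.congr_of_eventuallyEq (Eventually.of_forall fun y => ?_)
      show B.mulVec y i = _
      rw [mulVec_eq_inner]; rfl
    have hd : HasDerivAt (fun t => sMu μ t ^ p) (c i) (B.mulVec z i) := by
      have h1 := (sMu_hasDerivAt hμ (B.mulVec z i)).rpow_const (p := p)
        (Or.inl (sMu_pos hμ (B.mulVec z i)).ne')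
      convert h1 using 1
      simp only [hc]
      ring
    exact hd.comp_hasFDerivAt z hinner
  have hsum : HasFDerivAt (fun y : EuclideanSpace ℝ (Fin n) => ∑ i, sMu μ (B.mulVec y i) ^ p)
      (∑ i, c i • (innerSL ℝ (r i))) z :=
    HasFDerivAt.fun_sum (fun i _ => hterm i)
  have hmul : HasFDerivAt (fun y : EuclideanSpace ℝ (Fin n) =>
      lam * ∑ i, sMu μ (B.mulVec y i) ^ p)
      (lam • ∑ i, c i • (innerSL ℝ (r i))) z := hsum.const_mul lam
  have htotal : HasFDerivAt (fun y => fhat y + lam * ∑ i, sMu μ (B.mulVec y i) ^ p)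
      (fderiv ℝ fhat z + lam • ∑ i, c i • (innerSL ℝ (r i))) z :=
    hf.add hmul
  have hdual : InnerProductSpace.toDual ℝ (EuclideanSpace ℝ (Fin n))
      (gradient fhat z + lam • ∑ i, c i • r i)
      = fderiv ℝ fhat z + lam • ∑ i, c i • (innerSL ℝ (r i)) := by
    apply ContinuousLinearMap.ext
    intro y
    rw [InnerProductSpace.toDual_apply_apply, inner_add_left, real_inner_smul_left, sum_inner]
    simp only [ContinuousLinearMap.add_apply, ContinuousLinearMap.coe_smul', Pi.smul_apply,
      ContinuousLinearMap.sum_apply, ContinuousLinearMap.smul_apply, innerSL_apply_apply, smul_eq_mul]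
    congr 1
    · exact InnerProductSpace.toDual_symm_apply
    · congr 1
      apply Finset.sum_congr rfl
      intro i _
      rw [real_inner_smul_left]
  rw [hasGradientAt_iff_hasFDerivAt, hdual]
  exact htotal

/-- Riemannian gradient sub-consistency on the unit sphere of the smoothing
`f̃(x,μ) = f̂(x) + λ Σᵢ s_μ((Bx)ᵢ)ᵖ` of `f(x) = f̂(x) + λ Σᵢ |(Bx)ᵢ|ᵖ`, where `f̂` is
continuously differentiable, `B` has full column rank, `λ > 0`, and `0 < p < 1`:
for `x ∈ S^{n−1}`, every limit `v` of `Proj_{z_k}(∇ₓ f̃(z_k, μ_k))` along sequences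
`z_k ∈ S^{n−1}`, `z_k → x`, `μ_k → 0⁺` belongs to `∂_R f(x)`. -/
theorem riemannian_gradient_subconsistency_lp (n m : ℕ) (hn : 1 ≤ n) (hm : 1 ≤ m)
    (fhat : EuclideanSpace ℝ (Fin n) → ℝ) (hfhat : ContDiff ℝ 1 fhat)
    (B : Matrix (Fin m) (Fin n) ℝ) (hB : Function.Injective B.mulVec)
    (lam : ℝ) (hlam : 0 < lam) (p : ℝ) (hp0 : 0 < p) (hp1 : p < 1) :
    ∀ (x v : EuclideanSpace ℝ (Fin n)), ‖x‖ = 1 →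
      (∃ (z : ℕ → EuclideanSpace ℝ (Fin n)) (μ : ℕ → ℝ),
        (∀ k, ‖z k‖ = 1) ∧ Filter.Tendsto z Filter.atTop (nhds x) ∧ (∀ k, 0 < μ k) ∧
        Filter.Tendsto μ Filter.atTop (nhds 0) ∧
        Filter.Tendsto (fun k => sphereProj (z k) (gradient
            (fun y => fhat y + lam * ∑ i, sMu (μ k) (B.mulVec y i) ^ p) (z k)))
          Filter.atTop (nhds v)) →
      IsRLimitingSubgradient
        (fun y => fhat y + lam * ∑ i, |B.mulVec y i| ^ p) x v := by
  classical
  intro x v hx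
  rintro ⟨z, μ, hz1, hzx, hμpos, hμ0, hconv⟩
  set r : Fin m → EuclideanSpace ℝ (Fin n) := rowE B with hr
  set τ : Fin m → ℝ := fun i => B.mulVec x i with hτ
  set tt : ℕ → Fin m → ℝ := fun k i => B.mulVec (z k) i with htt
  set c : ℕ → Fin m → ℝ := fun k i =>
    p * sMu (μ k) (tt k i) ^ (p - 1) * sDer (μ k) (tt k i) with hc
  set γ : Fin m → ℝ := fun i =>
    if τ i = 0 then 0 else p * |τ i| ^ (p - 1) * (SignType.sign (τ i) : ℝ) with hγ
  set c' : ℕ → Fin m → ℝ := fun k i => if τ i = 0 then 0 else c k i with hc'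
  set a : ℕ → EuclideanSpace ℝ (Fin n) :=
    fun k => gradient fhat (z k) + lam • ∑ i, c' k i • r i with ha
  set u : ℕ → EuclideanSpace ℝ (Fin n) :=
    fun k => lam • ∑ i, (c k i - c' k i) • r i with hu
  set A : EuclideanSpace ℝ (Fin n) := gradient fhat x + lam • ∑ i, γ i • r i with hA
  -- gradient formula
  have hgrad : ∀ k, gradient
      (fun y => fhat y + lam * ∑ i, sMu (μ k) (B.mulVec y i) ^ p) (z k) = a k + u k := by
    intro k
    rw [(smoothed_hasGradientAt fhat hfhat B lam p (hμpos k) (z k)).gradient]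
    have hsplit : (∑ i, c k i • r i : EuclideanSpace ℝ (Fin n))
        = ∑ i, (c' k i • r i + (c k i - c' k i) • r i) := by
      apply Finset.sum_congr rfl
      intro i _
      rw [← add_smul]
      congr 1
      ring
    show gradient fhat (z k) + lam • ∑ i, c k i • r i = a k + u k
    rw [ha, hu, add_assoc, ← smul_add, ← Finset.sum_add_distrib, ← hsplit]
  -- convergence of the coordinates
  have ht_i : ∀ i, Tendsto (fun k => tt k i) atTop (nhds (τ i)) := by
    intro i
    have h1 : Tendsto (fun k => @inner ℝ (EuclideanSpace ℝ (Fin n)) _ (r i) (z k)) atTop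
        (nhds (@inner ℝ (EuclideanSpace ℝ (Fin n)) _ (r i) x)) :=
      Filter.Tendsto.inner tendsto_const_nhds hzx
    have h2 : ∀ k, tt k i = @inner ℝ (EuclideanSpace ℝ (Fin n)) _ (r i) (z k) :=
      fun k => mulVec_eq_inner B (z k) i
    have h3 : τ i = @inner ℝ (EuclideanSpace ℝ (Fin n)) _ (r i) x := mulVec_eq_inner B x i
    rw [h3]
    exact Tendsto.congr (fun k => (h2 k).symm) h1
  -- convergence of c for nonzero coordinates
  have hcγ : ∀ i, τ i ≠ 0 → Tendsto (fun k => c k i) atTop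
      (nhds (p * |τ i| ^ (p - 1) * (SignType.sign (τ i) : ℝ))) := by
    intro i hne
    have hrpow : ContinuousAt (fun s : ℝ => p * |s| ^ (p-1)) (τ i) := by
      have h5 : ContinuousAt (fun s : ℝ => |s| ^ (p-1)) (τ i) :=
        (Real.continuousAt_rpow_const |τ i| (p-1)
          (Or.inl (abs_ne_zero.mpr hne))).comp continuous_abs.continuousAt
      exact continuousAt_const.mul h5
    rcases hne.lt_or_gt with hlt | hgt
    · have h1 : ∀ᶠ k in atTop, tt k i < τ i / 2 := (ht_i i).eventually_lt_const (by linarith)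
      have h2 : ∀ᶠ k in atTop, μ k < -(τ i) / 2 := hμ0.eventually_lt_const (by linarith)
      have heq : (fun k => p * |tt k i| ^ (p-1) * (-1)) =ᶠ[atTop] (fun k => c k i) := by
        filter_upwards [h1, h2] with k hk1 hk2
        have htneg : tt k i < 0 := by linarith
        have habsk : μ k / 2 ≤ |tt k i| := by rw [abs_of_neg htneg]; linarith
        simp only [hc, sMu, sDer, if_pos habsk, sign_neg htneg, SignType.coe_neg_one]
      have hlim : Tendsto (fun k => p * |tt k i| ^ (p-1) * (-1)) atTop
          (nhds (p * |τ i| ^ (p-1) * (-1))) :=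
        ((hrpow.tendsto.comp (ht_i i)).mul tendsto_const_nhds)
      have hsg : (SignType.sign (τ i) : ℝ) = -1 := by simp [sign_neg hlt]
      rw [hsg]
      exact Filter.Tendsto.congr' heq hlim
    · have h1 : ∀ᶠ k in atTop, τ i / 2 < tt k i := (ht_i i).eventually_const_lt (by linarith)
      have h2 : ∀ᶠ k in atTop, μ k < τ i / 2 := hμ0.eventually_lt_const (by linarith)
      have heq : (fun k => p * |tt k i| ^ (p-1) * 1) =ᶠ[atTop] (fun k => c k i) := by
        filter_upwards [h1, h2] with k hk1 hk2
        have htpos : 0 < tt k i := by linarith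
        have habsk : μ k / 2 ≤ |tt k i| := by rw [abs_of_pos htpos]; linarith
        simp only [hc, sMu, sDer, if_pos habsk, sign_pos htpos, SignType.coe_one]
      have hlim : Tendsto (fun k => p * |tt k i| ^ (p-1) * 1) atTop
          (nhds (p * |τ i| ^ (p-1) * 1)) :=
        ((hrpow.tendsto.comp (ht_i i)).mul tendsto_const_nhds)
      have hsg : (SignType.sign (τ i) : ℝ) = 1 := by simp [sign_pos hgt]
      rw [hsg]
      exact Filter.Tendsto.congr' heq hlim
  -- convergence of a
  have hgradcont : Continuous (fun y : EuclideanSpace ℝ (Fin n) => gradient fhat y) := by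
    have : (fun y : EuclideanSpace ℝ (Fin n) => gradient fhat y)
        = fun y => (InnerProductSpace.toDual ℝ (EuclideanSpace ℝ (Fin n))).symm
            (fderiv ℝ fhat y) := rfl
    rw [this]
    exact (LinearIsometryEquiv.continuous _).comp (hfhat.continuous_fderiv one_ne_zero)
  have haA : Tendsto a atTop (nhds A) := by
    have h1 : Tendsto (fun k => gradient fhat (z k)) atTop (nhds (gradient fhat x)) :=
      (hgradcont.tendsto x).comp hzx
    have h2 : Tendsto (fun k => ∑ i, c' k i • r i) atTop (nhds (∑ i, γ i • r i)) := by
      apply tendsto_finset_sum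
      intro i _
      by_cases hτi : τ i = 0
      · simp only [hc', hγ, if_pos hτi]
        simpa using tendsto_const_nhds
      · simp only [hc', hγ, if_neg hτi]
        exact (hcγ i hτi).smul_const (r i)
    exact h1.add (h2.const_smul lam)
  -- convergence of the projections of u
  have hconv' : Tendsto (fun k => sphereProj (z k) (a k + u k)) atTop (nhds v) :=
    Tendsto.congr (fun k => by rw [← hgrad k]) hconv
  have haP : Tendsto (fun k => sphereProj (z k) (a k)) atTop (nhds (sphereProj x A)) := by
    simp only [sphereProj]
    exact haA.sub ((haA.inner hzx).smul hzx)
  set w : EuclideanSpace ℝ (Fin n) := v - sphereProj x A with hwdef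
  have hw : Tendsto (fun k => sphereProj (z k) (u k)) atTop (nhds w) := by
    have h1 : ∀ k, sphereProj (z k) (u k)
        = sphereProj (z k) (a k + u k) - sphereProj (z k) (a k) := by
      intro k; rw [sphereProj_add]; abel
    exact Tendsto.congr (fun k => (h1 k).symm) (hconv'.sub haP)
  -- inner products tend to zero
  have hinner0 : Tendsto (fun k => (inner ℝ (u k) (z k) : ℝ)) atTop (nhds 0) := by
    have hform : ∀ k, (inner ℝ (u k) (z k) : ℝ) = lam * ∑ i, (c k i - c' k i) * tt k i := by
      intro k
      rw [hu, real_inner_smul_left, sum_inner]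
      congr 1
      apply Finset.sum_congr rfl
      intro i _
      rw [real_inner_smul_left]
      congr 1
      exact (mulVec_eq_inner B (z k) i).symm
    have hterm0 : ∀ i : Fin m, Tendsto (fun k => (c k i - c' k i) * tt k i) atTop (nhds 0) := by
      intro i
      by_cases hτi : τ i = 0
      · simp only [hc', if_pos hτi, sub_zero]
        have hsMu0 : Tendsto (fun k => sMu (μ k) (tt k i)) atTop (nhds 0) := by
          apply squeeze_zero (fun k => (sMu_pos (hμpos k) (tt k i)).le)
            (fun k => sMu_le (hμpos k) (tt k i))
          have h1 : Tendsto (fun k => |tt k i| + μ k / 2) atTop (nhds (|τ i| + 0/2)) :=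
            ((continuous_abs.tendsto _).comp (ht_i i)).add (hμ0.div_const 2)
          simpa [hτi] using h1
        have hsp : Tendsto (fun k => 2 * p * sMu (μ k) (tt k i) ^ p) atTop (nhds 0) := by
          have hca : ContinuousAt (fun s : ℝ => s ^ p) 0 :=
            Real.continuousAt_rpow_const 0 p (Or.inr hp0.le)
          have h2 := hca.tendsto.comp hsMu0
          rw [Real.zero_rpow hp0.ne'] at h2
          simpa using (h2.const_mul (2*p))
        apply squeeze_zero_norm _ hsp
        intro k
        rw [Real.norm_eq_abs]
        exact cderiv_mul_bound (hμpos k) hp0 (tt k i)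
      · simp only [hc', if_neg hτi, sub_self, zero_mul]
        exact tendsto_const_nhds
    have hsum0 : Tendsto (fun k => lam * ∑ i, (c k i - c' k i) * tt k i) atTop (nhds 0) := by
      have := (tendsto_finset_sum Finset.univ (fun i _ => hterm0 i)).const_mul lam
      simpa using this
    exact Tendsto.congr (fun k => (hform k).symm) hsum0
  -- u converges to w
  have hu2 : Tendsto u atTop (nhds w) := by
    have hform2 : ∀ k, u k = sphereProj (z k) (u k) + (inner ℝ (u k) (z k) : ℝ) • z k := by
      intro k
      rw [sphereProj]
      abel
    have := hw.add (hinner0.smul hzx)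
    rw [zero_smul, add_zero] at this
    exact Tendsto.congr (fun k => (hform2 k).symm) this
  -- w lies in the span of the rows with zero coordinate
  set r' : Fin m → EuclideanSpace ℝ (Fin n) := fun i => if τ i = 0 then r i else 0 with hr'
  have humem : ∀ k, u k ∈ Submodule.span ℝ (Set.range r') := by
    intro k
    apply Submodule.smul_mem
    apply Submodule.sum_mem
    intro i _
    by_cases hτi : τ i = 0
    · have hri : r i = r' i := by rw [hr']; simp [hτi]
      rw [hri]
      exact Submodule.smul_mem _ _ (Submodule.subset_span ⟨i, rfl⟩)
    · simp only [hc', if_neg hτi, sub_self, zero_smul]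
      exact Submodule.zero_mem _
  have hwmem : w ∈ Submodule.span ℝ (Set.range r') := by
    have hcl : IsClosed ((Submodule.span ℝ (Set.range r') :
        Submodule ℝ (EuclideanSpace ℝ (Fin n))) : Set (EuclideanSpace ℝ (Fin n))) :=
      Submodule.closed_of_finiteDimensional _
    exact hcl.mem_of_tendsto hu2 (Eventually.of_forall humem)
  obtain ⟨wc, hwc⟩ := (Submodule.mem_span_range_iff_exists_fun ℝ).mp hwmem
  -- inner w x = 0
  have hwx : (inner ℝ w x : ℝ) = 0 := by
    rw [← hwc, sum_inner]
    apply Finset.sum_eq_zero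
    intro i _
    rw [real_inner_smul_left]
    by_cases hτi : τ i = 0
    · have h1 : (inner ℝ (r' i) x : ℝ) = τ i := by
        rw [hr']
        simp only [if_pos hτi]
        exact (mulVec_eq_inner B x i).symm
      rw [h1, hτi, mul_zero]
    · simp [hr', hτi]
  -- choose δ
  obtain ⟨δ, hδpos, hδ⟩ : ∃ δ > (0:ℝ), ∀ y, dist y x < δ → ∀ i, τ i ≠ 0 → B.mulVec y i ≠ 0 := by
    have hev : ∀ᶠ y : EuclideanSpace ℝ (Fin n) in nhds x, ∀ i, τ i ≠ 0 → B.mulVec y i ≠ 0 := by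
      rw [eventually_all]
      intro i
      by_cases hτi : τ i = 0
      · exact Eventually.of_forall (fun y hcon => absurd hτi hcon)
      · have hcont : Tendsto (fun y : EuclideanSpace ℝ (Fin n) => B.mulVec y i) (nhds x)
            (nhds (τ i)) := by
          have h1 : Continuous (fun y : EuclideanSpace ℝ (Fin n) =>
              (@inner ℝ (EuclideanSpace ℝ (Fin n)) _ (r i) y : ℝ)) :=
            Continuous.inner continuous_const continuous_id
          have h3 : τ i = @inner ℝ (EuclideanSpace ℝ (Fin n)) _ (r i) x := mulVec_eq_inner B x i
          rw [h3]
          exact Tendsto.congr (fun y => (mulVec_eq_inner B y i).symm) (h1.tendsto x)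
        exact (hcont.eventually_ne hτi).mono (fun y hy _ => hy)
    exact exists_ball_of_eventually hev
  -- choose κ and ε
  have hκ : ∀ i, ∃ κ > (0:ℝ), ∀ s : ℝ, |s| ≤ κ → wc i * s ≤ lam * |s| ^ p :=
    fun i => scalar_minor hlam hp0 hp1 (wc i)
  choose κ hκpos hκle using hκ
  obtain ⟨ε, hεpos, hε⟩ : ∃ ε > (0:ℝ), ∀ y, dist y x < ε → ∀ i, τ i = 0 →
      |B.mulVec y i| ≤ κ i := by
    have hev : ∀ᶠ y : EuclideanSpace ℝ (Fin n) in nhds x, ∀ i, τ i = 0 → |B.mulVec y i| ≤ κ i := by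
      rw [eventually_all]
      intro i
      by_cases hτi : τ i = 0
      · have hcont : Tendsto (fun y : EuclideanSpace ℝ (Fin n) => |B.mulVec y i|) (nhds x)
            (nhds 0) := by
          have h1 : Continuous (fun y : EuclideanSpace ℝ (Fin n) =>
              (@inner ℝ (EuclideanSpace ℝ (Fin n)) _ (r i) y : ℝ)) :=
            Continuous.inner continuous_const continuous_id
          have h2 := (h1.abs.tendsto x)
          have h3 : |(@inner ℝ (EuclideanSpace ℝ (Fin n)) _ (r i) x : ℝ)| = 0 := by
            rw [← mulVec_eq_inner]
            simp [show B.mulVec x i = 0 from hτi]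
          rw [h3] at h2
          exact Tendsto.congr (fun y => by rw [mulVec_eq_inner B y i]) h2
        exact (hcont.eventually_lt_const (hκpos i)).mono (fun y hy _ => hy.le)
      · exact Eventually.of_forall (fun y hcon => absurd hcon hτi)
    exact exists_ball_of_eventually hev
  -- the test function h
  set hfun : EuclideanSpace ℝ (Fin n) → ℝ := fun y =>
    fhat y + lam * ∑ i, (if τ i = 0 then (0:ℝ) else |B.mulVec y i| ^ p)
      + (inner ℝ w y : ℝ) with hhfun
  -- mulVec has a derivative
  have hmv : ∀ (y0 : EuclideanSpace ℝ (Fin n)) (i : Fin m),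
      HasFDerivAt (fun y : EuclideanSpace ℝ (Fin n) => B.mulVec y i) (innerSL ℝ (r i)) y0 := by
    intro y0 i
    have h0 := (innerSL ℝ (r i)).hasFDerivAt (x := y0)
    refine h0.congr_of_eventuallyEq (Eventually.of_forall fun y => ?_)
    show B.mulVec y i = _
    rw [mulVec_eq_inner]; rfl
  -- gradient of hfun at x
  have hgrad2 : HasGradientAt hfun (A + w) x := by
    have hf : HasFDerivAt fhat (fderiv ℝ fhat x) x :=
      (hfhat.differentiable one_ne_zero x).hasFDerivAt
    have hterm : ∀ i : Fin m, HasFDerivAt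
        (fun y : EuclideanSpace ℝ (Fin n) => if τ i = 0 then (0:ℝ) else |B.mulVec y i| ^ p)
        (γ i • innerSL ℝ (r i)) x := by
      intro i
      by_cases hτi : τ i = 0
      · simp only [if_pos hτi, hγ, zero_smul]
        exact hasFDerivAt_const 0 x
      · simp only [if_neg hτi]
        have hd : HasDerivAt (fun s : ℝ => |s| ^ p) (γ i) (τ i) := by
          have h1 := (hasDerivAt_abs hτi).rpow_const (p := p) (Or.inl (abs_ne_zero.mpr hτi))
          convert h1 using 1
          simp only [hγ, if_neg hτi]
          ring
        have := hd.comp_hasFDerivAt x (hmv x i)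
        exact this
    have hsum : HasFDerivAt (fun y : EuclideanSpace ℝ (Fin n) =>
        ∑ i, (if τ i = 0 then (0:ℝ) else |B.mulVec y i| ^ p))
        (∑ i, γ i • innerSL ℝ (r i)) x :=
      HasFDerivAt.fun_sum (fun i _ => hterm i)
    have hmul : HasFDerivAt (fun y : EuclideanSpace ℝ (Fin n) =>
        lam * ∑ i, (if τ i = 0 then (0:ℝ) else |B.mulVec y i| ^ p))
        (lam • ∑ i, γ i • innerSL ℝ (r i)) x := hsum.const_mul lam
    have hlin : HasFDerivAt (fun y : EuclideanSpace ℝ (Fin n) => (inner ℝ w y : ℝ))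
        (innerSL ℝ w) x := (innerSL ℝ w).hasFDerivAt
    have htotal : HasFDerivAt hfun
        (fderiv ℝ fhat x + lam • ∑ i, γ i • innerSL ℝ (r i) + innerSL ℝ w) x :=
      (hf.add hmul).add hlin
    have hdual : InnerProductSpace.toDual ℝ (EuclideanSpace ℝ (Fin n)) (A + w)
        = fderiv ℝ fhat x + lam • ∑ i, γ i • innerSL ℝ (r i) + innerSL ℝ w := by
      apply ContinuousLinearMap.ext
      intro y
      rw [InnerProductSpace.toDual_apply_apply, hA, inner_add_left, inner_add_left,
        real_inner_smul_left, sum_inner]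
      simp only [ContinuousLinearMap.add_apply, ContinuousLinearMap.coe_smul', Pi.smul_apply,
        ContinuousLinearMap.sum_apply, ContinuousLinearMap.smul_apply, innerSL_apply_apply,
        smul_eq_mul]
      congr 2
      · exact InnerProductSpace.toDual_symm_apply
      · congr 1
        apply Finset.sum_congr rfl
        intro i _
        rw [real_inner_smul_left]
    rw [hasGradientAt_iff_hasFDerivAt, hdual]
    exact htotal
  -- difference formula
  have hval : ∀ y' : EuclideanSpace ℝ (Fin n),
      (fhat y' + lam * ∑ i, |B.mulVec y' i| ^ p) - hfun y'
      = ∑ i, (if τ i = 0 then lam * |B.mulVec y' i| ^ p - wc i * B.mulVec y' i else 0) := by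
    intro y'
    have hinnerw : (inner ℝ w y' : ℝ)
        = ∑ i, (if τ i = 0 then wc i * B.mulVec y' i else 0) := by
      rw [← hwc, sum_inner]
      apply Finset.sum_congr rfl
      intro i _
      rw [real_inner_smul_left, hr']
      by_cases hτi : τ i = 0
      · simp only [if_pos hτi]
        rw [← mulVec_eq_inner]
      · simp [hτi]
    have expand : ∑ i, ((lam * |B.mulVec y' i| ^ p
          - lam * (if τ i = 0 then (0:ℝ) else |B.mulVec y' i| ^ p))
          - (if τ i = 0 then wc i * B.mulVec y' i else 0))
        = fhat y' + lam * ∑ i, |B.mulVec y' i| ^ p -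
          (fhat y' + lam * ∑ i, (if τ i = 0 then (0:ℝ) else |B.mulVec y' i| ^ p)
            + ∑ i, (if τ i = 0 then wc i * B.mulVec y' i else 0)) := by
      rw [Finset.sum_sub_distrib, Finset.sum_sub_distrib, ← Finset.mul_sum, ← Finset.mul_sum]
      ring
    have hbody : hfun y' = fhat y' + lam * ∑ i,
        (if τ i = 0 then (0:ℝ) else |B.mulVec y' i| ^ p) + (inner ℝ w y' : ℝ) := rfl
    rw [hbody, hinnerw, ← expand]
    apply Finset.sum_congr rfl
    intro i _
    by_cases hτi : τ i = 0
    · simp only [if_pos hτi]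
      ring
    · simp only [if_neg hτi]
      ring
  -- the value at x is zero
  have hvalx : (fhat x + lam * ∑ i, |B.mulVec x i| ^ p) - hfun x = 0 := by
    rw [hval x]
    apply Finset.sum_eq_zero
    intro i _
    by_cases hτi : τ i = 0
    · have hBx : B.mulVec x i = 0 := hτi
      simp only [if_pos hτi, hBx, abs_zero, Real.zero_rpow hp0.ne', mul_zero, sub_zero]
    · rw [if_neg hτi]
  -- local minimality
  have hmin : ∀ y, ‖y‖ = 1 → ‖y - x‖ < ε →
      (fhat x + lam * ∑ i, |B.mulVec x i| ^ p) - hfun x ≤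
      (fhat y + lam * ∑ i, |B.mulVec y i| ^ p) - hfun y := by
    intro y hy1 hyx
    rw [hvalx, hval y]
    apply Finset.sum_nonneg
    intro i _
    by_cases hτi : τ i = 0
    · rw [if_pos hτi]
      have hbd : |B.mulVec y i| ≤ κ i := by
        apply hε y _ i hτi
        rwa [dist_eq_norm]
      have := hκle i (B.mulVec y i) hbd
      linarith
    · rw [if_neg hτi]
  -- smoothness of hfun on the ball
  have hC1 : ContDiffOn ℝ 1 hfun (Metric.ball x δ) := by
    intro y hy
    apply ContDiffAt.contDiffWithinAt
    have hyd : dist y x < δ := by rwa [Metric.mem_ball] at hy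
    show ContDiffAt ℝ 1 (fun y' => fhat y' + lam * ∑ i,
        (if τ i = 0 then (0:ℝ) else |B.mulVec y' i| ^ p) + (inner ℝ w y' : ℝ)) y
    refine ContDiffAt.add (ContDiffAt.add hfhat.contDiffAt ?_) ?_
    · refine ContDiffAt.mul contDiffAt_const ?_
      apply ContDiffAt.sum
      intro i _
      by_cases hτi : τ i = 0
      · simp only [if_pos hτi]
        exact contDiffAt_const
      · simp only [if_neg hτi]
        have hne : B.mulVec y i ≠ 0 := hδ y hyd i hτi
        have h1 : ContDiffAt ℝ 1 (fun s : ℝ => |s| ^ p) (B.mulVec y i) := by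
          have ha1 : ContDiffAt ℝ 1 (fun s : ℝ => |s|) (B.mulVec y i) := contDiffAt_abs hne
          have ha2 : ContDiffAt ℝ 1 (fun s : ℝ => s ^ p) (|B.mulVec y i|) :=
            Real.contDiffAt_rpow_const_of_ne (abs_ne_zero.mpr hne)
          exact ha2.comp _ ha1
        have h2 : ContDiffAt ℝ 1 (fun y' : EuclideanSpace ℝ (Fin n) => B.mulVec y' i) y := by
          have h3 := ((innerSL ℝ (r i)).contDiff (n := 1)).contDiffAt (x := y)
          refine h3.congr_of_eventuallyEq (Eventually.of_forall fun y' => ?_)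
          show B.mulVec y' i = _
          rw [mulVec_eq_inner]; rfl
        exact h1.comp y h2
    · have h3 := ((innerSL ℝ w).contDiff (n := 1)).contDiffAt (x := y)
      refine h3.congr_of_eventuallyEq (Eventually.of_forall fun y' => ?_)
      rfl
  -- the gradient identity
  have hveq : v = sphereProj x (gradient hfun x) := by
    rw [hgrad2.gradient, sphereProj_add]
    have hPw : sphereProj x w = w := by
      rw [sphereProj, hwx, zero_smul, sub_zero]
    rw [hPw, hwdef]
    abel
  -- assemble
  refine ⟨fun _ => x, fun _ => v, fun _ => hx, tendsto_const_nhds, tendsto_const_nhds,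
    fun _ => ?_, tendsto_const_nhds⟩
  exact ⟨δ, hδpos, hfun, hC1, ⟨ε, hεpos, hmin⟩, hveq⟩
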